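/- Let k ≥ 2, let p be a probability vector on {1,…,k} (i.e. p ∈ Δ^k), and let X_1,…,X_n be i.i.d. random variables with distribution p. Let p̂_n denote the empirical distribution, p̂_n(i) = (1/n)·#{j ≤ n : X_j = i}. Then for every ε > 0, the probability that ‖p̂_n − p‖₁ ≥ ε is at most (2^k − 2)·exp(−n·ε²/2). -/

import Mathlib

open MeasureTheory ProbabilityTheory Real



lemma bern_mgf_bound (q : ℝ) (hq0 : 0 ≤ q) (hq1 : q ≤ 1) (t : ℝ) :
    (1 - q) * Real.exp (-q * t) + q * Real.exp ((1 - q) * t) ≤ Real.exp (t ^ 2 / 8) := by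
  set D : ℝ → ℝ := fun t => 1 - q + q * Real.exp t with hD
  have hDpos : ∀ s, 0 < D s := by
    intro s
    show 0 < 1 - q + q * Real.exp s
    rcases lt_or_eq_of_le hq0 with h | h
    · nlinarith [Real.exp_pos s, mul_pos h (Real.exp_pos s)]
    · simp [← h]
  set f : ℝ → ℝ := fun t => t ^ 2 / 8 + q * t - Real.log (D t) with hf
  set f1 : ℝ → ℝ := fun t => t / 4 + q - q * Real.exp t / D t with hf1
  set f2 : ℝ → ℝ := fun t => 1 / 4 - q * (1 - q) * Real.exp t / (D t) ^ 2 with hf2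
  have hDderiv : ∀ s, HasDerivAt D (q * Real.exp s) s := by
    intro s
    exact ((Real.hasDerivAt_exp s).const_mul q).const_add (1 - q)
  have hfderiv : ∀ s, HasDerivAt f (f1 s) s := by
    intro s
    have h1 : HasDerivAt (fun t : ℝ => t ^ 2 / 8 + q * t) (s / 4 + q) s := by
      have := ((hasDerivAt_pow 2 s).div_const 8).add ((hasDerivAt_id s).const_mul q)
      exact (this : HasDerivAt (fun t : ℝ => t ^ 2 / 8 + q * t) _ s).congr_deriv
        (by rw [show (2:ℕ) - 1 = 1 from rfl, pow_one]; push_cast; ring)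
    have h2 : HasDerivAt (fun t => Real.log (D t)) (q * Real.exp s / D s) s :=
      (hDderiv s).log (hDpos s).ne'
    exact h1.sub h2
  have hf1deriv : ∀ s, HasDerivAt f1 (f2 s) s := by
    intro s
    have h1 : HasDerivAt (fun t : ℝ => t / 4 + q) (1 / 4) s := by
      simpa using ((hasDerivAt_id s).div_const 4).add_const q
    have h2 : HasDerivAt (fun t => q * Real.exp t / D t)
        ((q * Real.exp s * D s - q * Real.exp s * (q * Real.exp s)) / (D s) ^ 2) s :=
      ((Real.hasDerivAt_exp s).const_mul q).div (hDderiv s) (hDpos s).ne'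
    have h3 : HasDerivAt f1
        (1 / 4 - (q * Real.exp s * D s - q * Real.exp s * (q * Real.exp s)) / (D s) ^ 2) s :=
      h1.sub h2
    convert h3 using 1
    have hd : (0:ℝ) < D s := hDpos s
    have hD2 : (D s) ^ 2 ≠ 0 := by positivity
    rw [hf2]
    have hDs : D s = 1 - q + q * Real.exp s := rfl
    field_simp
    ring
  have hf2nonneg : ∀ s, 0 ≤ f2 s := by
    intro s
    have hd : (0:ℝ) < D s := hDpos s
    have hD2 : (0:ℝ) < (D s) ^ 2 := by positivity
    rw [hf2]
    show 0 ≤ 1 / 4 - q * (1 - q) * Real.exp s / (D s) ^ 2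
    rw [sub_nonneg, div_le_iff₀ hD2]
    have hDs : D s = 1 - q + q * Real.exp s := rfl
    nlinarith [sq_nonneg (1 - q - q * Real.exp s), Real.exp_pos s]
  have hD0 : D 0 = 1 := by show 1 - q + q * Real.exp 0 = 1; simp
  have hf10 : f1 0 = 0 := by show 0 / 4 + q - q * Real.exp 0 / D 0 = 0; rw [hD0]; simp
  have hf0 : f 0 = 0 := by show 0 ^ 2 / 8 + q * 0 - Real.log (D 0) = 0; rw [hD0]; simp
  have hf1mono : Monotone f1 :=
    monotone_of_deriv_nonneg (fun s => (hf1deriv s).differentiableAt)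
      (fun s => by rw [(hf1deriv s).deriv]; exact hf2nonneg s)
  have hdiff : Differentiable ℝ f := fun s => (hfderiv s).differentiableAt
  have hfnonneg : 0 ≤ f t := by
    rcases le_total 0 t with h | h
    · have hm : MonotoneOn f (Set.Ici 0) := by
        apply monotoneOn_of_deriv_nonneg (convex_Ici 0) hdiff.continuous.continuousOn
          (fun x _ => (hdiff x).differentiableWithinAt)
        intro x hx
        rw [(hfderiv x).deriv, ← hf10]
        exact hf1mono (le_of_lt (by simpa using hx))
      have := hm (Set.self_mem_Ici) h h
      rwa [hf0] at this
    · have hm : AntitoneOn f (Set.Iic 0) := by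
        apply antitoneOn_of_deriv_nonpos (convex_Iic 0) hdiff.continuous.continuousOn
          (fun x _ => (hdiff x).differentiableWithinAt)
        intro x hx
        rw [(hfderiv x).deriv, ← hf10]
        exact hf1mono (le_of_lt (by simpa using hx))
      have := hm h Set.self_mem_Iic h
      rwa [hf0] at this
  -- conclude
  have hlog : Real.log (D t) ≤ t ^ 2 / 8 + q * t := by
    have : 0 ≤ t ^ 2 / 8 + q * t - Real.log (D t) := hfnonneg
    linarith
  have hDle : D t ≤ Real.exp (t ^ 2 / 8 + q * t) := by
    rw [← Real.exp_log (hDpos t)]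
    exact Real.exp_le_exp.mpr hlog
  have hLHS : (1 - q) * Real.exp (-q * t) + q * Real.exp ((1 - q) * t)
      = Real.exp (-q * t) * D t := by
    have hDt : D t = 1 - q + q * Real.exp t := rfl
    rw [hDt]
    rw [show (1 - q) * t = t + (-q * t) by ring, Real.exp_add]
    ring
  rw [hLHS]
  calc Real.exp (-q * t) * D t ≤ Real.exp (-q * t) * Real.exp (t ^ 2 / 8 + q * t) := by
        exact mul_le_mul_of_nonneg_left hDle (Real.exp_pos _).le
    _ = Real.exp (t ^ 2 / 8) := by rw [← Real.exp_add]; ring_nf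

open MeasureTheory ProbabilityTheory Real

lemma chernoff_subset
    (k n : ℕ) (hn : 1 ≤ n)
    (Ω : Type*) [MeasurableSpace Ω] (μ : Measure Ω) [IsProbabilityMeasure μ]
    (X : Fin n → Ω → Fin k)
    (hmeas : ∀ j, Measurable (X j))
    (hindep : iIndepFun X μ)
    (A : Finset (Fin k)) (q : ℝ) (hq0 : 0 ≤ q) (hq1 : q ≤ 1)
    (hA : ∀ j, μ {ω | X j ω ∈ A} = ENNReal.ofReal q)
    (ε : ℝ) (hε : 0 < ε) :
    μ {ω | (n : ℝ) * ε / 2 ≤ ∑ j, ((if X j ω ∈ A then (1:ℝ) else 0) - q)}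
      ≤ ENNReal.ofReal (Real.exp (-(n : ℝ) * ε ^ 2 / 2)) := by
  classical
  set g : Fin k → ℝ := fun x => (if x ∈ A then (1:ℝ) else 0) - q with hg
  set W : Fin n → Ω → ℝ := fun j ω => g (X j ω) with hW
  set t : ℝ := 2 * ε with ht
  have hgm : ∀ j : Fin n, Measurable g := fun _ => Measurable.of_discrete
  have hWmeas : ∀ j, Measurable (W j) := fun j => (hgm j).comp (hmeas j)
  have hWindep : iIndepFun W μ :=
    hindep.comp (fun _ => g) hgm
  -- integrability of exp (t * W j)
  have hWbdd : ∀ j ω, |W j ω| ≤ 1 := by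
    intro j ω
    rw [hW, hg]
    simp only [abs_sub_le_iff]
    constructor <;> split_ifs <;> simp <;> linarith
  have hint : ∀ j : Fin n, Integrable (fun ω => Real.exp (t * W j ω)) μ := by
    intro j
    apply Integrable.mono' (integrable_const (Real.exp |t|))
      (((hWmeas j).const_mul t).exp.aestronglyMeasurable)
    filter_upwards with ω
    rw [Real.norm_eq_abs, abs_of_pos (Real.exp_pos _)]
    apply Real.exp_le_exp.mpr
    calc t * W j ω ≤ |t * W j ω| := le_abs_self _
      _ = |t| * |W j ω| := abs_mul _ _
      _ ≤ |t| * 1 := by gcongr; exact hWbdd j ω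
      _ = |t| := mul_one _
  -- mgf of each W j
  have hmgf : ∀ j : Fin n, mgf (W j) μ t ≤ Real.exp (t ^ 2 / 8) := by
    intro j
    have hset : MeasurableSet {ω | X j ω ∈ A} := (hmeas j) (by measurability)
    have hμA : (μ {ω | X j ω ∈ A}).toReal = q := by rw [hA j, ENNReal.toReal_ofReal hq0]
    have hμAc : (μ {ω | X j ω ∈ A}ᶜ).toReal = 1 - q := by
      rw [measure_compl hset (measure_ne_top _ _), measure_univ, hA j]
      rw [ENNReal.toReal_sub_of_le (by simpa using ENNReal.ofReal_le_one.mpr hq1) (by simp)]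
      simp [ENNReal.toReal_ofReal hq0]
    have hfun : (fun ω => Real.exp (t * W j ω)) =
        fun ω => Set.indicator {ω | X j ω ∈ A} (fun _ => Real.exp (t * (1 - q))) ω
          + Set.indicator {ω | X j ω ∈ A}ᶜ (fun _ => Real.exp (t * (-q))) ω := by
      funext ω
      by_cases h : X j ω ∈ A
      · simp only [Set.indicator, Set.mem_compl_iff, Set.mem_setOf_eq, h, if_true,
          not_true, if_false, hW, hg]
        simp [h]
      · simp only [Set.indicator, Set.mem_compl_iff, Set.mem_setOf_eq, h, if_false,
          not_false_iff, if_true, hW, hg]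
        simp [h]
    have : mgf (W j) μ t = q * Real.exp (t * (1 - q)) + (1 - q) * Real.exp (t * (-q)) := by
      rw [mgf, hfun, integral_add
        ((integrable_const _).indicator hset) ((integrable_const _).indicator hset.compl),
        integral_indicator_const _ hset, integral_indicator_const _ hset.compl, measureReal_def, measureReal_def, hμA, hμAc]
      simp [smul_eq_mul]
    rw [this]
    have := bern_mgf_bound q hq0 hq1 t
    calc q * Real.exp (t * (1 - q)) + (1 - q) * Real.exp (t * (-q))
        = (1 - q) * Real.exp (-q * t) + q * Real.exp ((1 - q) * t) := by ring_nf
      _ ≤ Real.exp (t ^ 2 / 8) := this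
  -- Chernoff
  have htpos : 0 ≤ t := by positivity
  have hsum_int : Integrable (fun ω => Real.exp (t * (∑ j, W j) ω)) μ := by
    have := iIndepFun.integrable_exp_mul_sum hWindep hWmeas
      (s := Finset.univ) (fun i _ => hint i)
    simpa using this
  have hch := measure_ge_le_exp_mul_mgf (μ := μ) (X := ∑ j, W j) ((n : ℝ) * ε / 2) htpos hsum_int
  have hmgfsum : mgf (∑ j, W j) μ t ≤ Real.exp ((n : ℝ) * (t ^ 2 / 8)) := by
    rw [hWindep.mgf_sum hWmeas Finset.univ]
    calc ∏ j : Fin n, mgf (W j) μ t ≤ ∏ j : Fin n, Real.exp (t ^ 2 / 8) :=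
          Finset.prod_le_prod (fun j _ => mgf_nonneg) (fun j _ => hmgf j)
      _ = Real.exp ((n : ℝ) * (t ^ 2 / 8)) := by
          rw [Finset.prod_const, ← Real.exp_nat_mul, Finset.card_univ, Fintype.card_fin]
  have hfinal : (μ {ω | (n : ℝ) * ε / 2 ≤ (∑ j, W j) ω}).toReal
      ≤ Real.exp (-(n : ℝ) * ε ^ 2 / 2) := by
    calc (μ {ω | (n : ℝ) * ε / 2 ≤ (∑ j, W j) ω}).toReal
        ≤ Real.exp (-t * ((n : ℝ) * ε / 2)) * mgf (∑ j, W j) μ t := hch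
      _ ≤ Real.exp (-t * ((n : ℝ) * ε / 2)) * Real.exp ((n : ℝ) * (t ^ 2 / 8)) := by
          have := (Real.exp_pos (-t * ((n : ℝ) * ε / 2))).le
          exact mul_le_mul_of_nonneg_left hmgfsum this
      _ = Real.exp (-(n : ℝ) * ε ^ 2 / 2) := by
          rw [← Real.exp_add]
          congr 1
          rw [ht]
          ring
  have hsetEq : {ω | (n : ℝ) * ε / 2 ≤ ∑ j, ((if X j ω ∈ A then (1:ℝ) else 0) - q)}
      = {ω | (n : ℝ) * ε / 2 ≤ (∑ j, W j) ω} := by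
    ext ω
    simp [hW, hg]
  rw [hsetEq]
  rw [← ENNReal.ofReal_toReal (measure_ne_top μ _)]
  exact ENNReal.ofReal_le_ofReal hfinal
/-- **Weissman et al. L1 concentration bound for the empirical distribution.**
If `X_1, …, X_n` are i.i.d. with distribution `p ∈ Δ^k` (`k ≥ 2`), and `p̂` is the
empirical distribution, then `P(‖p̂ − p‖₁ ≥ ε) ≤ (2^k − 2)·exp(−n ε² / 2)`. -/
theorem l1_empirical_concentration
    (k n : ℕ) (hk : 2 ≤ k) (hn : 1 ≤ n)
    (p : Fin k → ℝ) (hp : p ∈ stdSimplex ℝ (Fin k))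
    (Ω : Type*) [MeasurableSpace Ω] (μ : Measure Ω) [IsProbabilityMeasure μ]
    (X : Fin n → Ω → Fin k)
    (hmeas : ∀ j, Measurable (X j))
    (hindep : iIndepFun X μ)
    (hdist : ∀ j i, μ {ω | X j ω = i} = ENNReal.ofReal (p i))
    (ε : ℝ) (hε : 0 < ε) :
    μ {ω | ε ≤ ∑ i, |((Finset.univ.filter (fun j => X j ω = i)).card : ℝ) / n - p i|}
      ≤ ENNReal.ofReal ((2 ^ k - 2) * Real.exp (-(n : ℝ) * ε ^ 2 / 2)) := by
  classical
  obtain ⟨hp0, hp1⟩ := hp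
  have hnpos : (0:ℝ) < n := by exact_mod_cast hn
  set Q : Finset (Fin k) → ℝ := fun A => ∑ i ∈ A, p i with hQ
  have hQ0 : ∀ A, 0 ≤ Q A := fun A => Finset.sum_nonneg (fun i _ => hp0 i)
  have hQ1 : ∀ A, Q A ≤ 1 := by
    intro A
    rw [← hp1]
    exact Finset.sum_le_sum_of_subset_of_nonneg (Finset.subset_univ A)
      (fun i _ _ => hp0 i)
  have hA : ∀ (A : Finset (Fin k)) (j : Fin n), μ {ω | X j ω ∈ A} = ENNReal.ofReal (Q A) := by
    intro A j
    have h1 : {ω | X j ω ∈ A} = ⋃ i ∈ A, {ω | X j ω = i} := by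
      ext ω; simp
    rw [h1, measure_biUnion_finset]
    · rw [hQ, ENNReal.ofReal_sum_of_nonneg (fun i _ => hp0 i)]
      exact Finset.sum_congr rfl (fun i _ => hdist j i)
    · intro a _ b _ hab
      simp only [Function.onFun, Set.disjoint_left, Set.mem_setOf_eq]
      intro ω h1 h2
      exact hab (h1 ▸ h2 ▸ rfl)
    · intro i _
      have hpre : {ω | X j ω = i} = X j ⁻¹' {i} := rfl
      rw [hpre]
      exact hmeas j (measurableSet_singleton i)
  set S : Finset (Finset (Fin k)) :=
    ((Finset.univ : Finset (Fin k)).powerset.erase ∅).erase Finset.univ with hS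
  set E : Finset (Fin k) → Set Ω :=
    fun A => {ω | (n : ℝ) * ε / 2 ≤ ∑ j, ((if X j ω ∈ A then (1:ℝ) else 0) - Q A)} with hE
  -- event inclusion
  have hincl : {ω | ε ≤ ∑ i, |((Finset.univ.filter (fun j => X j ω = i)).card : ℝ) / n - p i|}
      ⊆ ⋃ A ∈ S, E A := by
    intro ω hω
    simp only [Set.mem_setOf_eq] at hω
    set c : Fin k → ℝ := fun i => ((Finset.univ.filter (fun j => X j ω = i)).card : ℝ) with hc
    set d : Fin k → ℝ := fun i => c i / n - p i with hd
    have hsumc : ∑ i, c i = n := by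
      rw [hc, ← Nat.cast_sum]
      congr 1
      have h := Finset.card_eq_sum_card_fiberwise
        (s := (Finset.univ : Finset (Fin n))) (t := (Finset.univ : Finset (Fin k)))
        (f := fun j => X j ω) (fun j _ => Finset.mem_univ _)
      simp only [Finset.card_univ, Fintype.card_fin] at h
      exact h.symm
    have hsumd : ∑ i, d i = 0 := by
      rw [hd, Finset.sum_sub_distrib, ← Finset.sum_div, hsumc, hp1]
      field_simp
      ring
    set A : Finset (Fin k) := Finset.univ.filter (fun i => 0 < d i) with hAdef
    have hsplit : ∑ i ∈ A, d i + ∑ i ∈ Finset.univ.filter (fun i => ¬ 0 < d i), d i = 0 := by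
      rw [Finset.sum_filter_add_sum_filter_not]
      exact hsumd
    have habs : ∑ i, |d i| = 2 * ∑ i ∈ A, d i := by
      rw [← Finset.sum_filter_add_sum_filter_not Finset.univ (fun i => 0 < d i)
        (fun i => |d i|)]
      have e1 : ∑ i ∈ Finset.univ.filter (fun i => 0 < d i), |d i| = ∑ i ∈ A, d i :=
        Finset.sum_congr rfl (fun i hi => abs_of_pos (Finset.mem_filter.mp hi).2)
      have e2 : ∑ i ∈ Finset.univ.filter (fun i => ¬ 0 < d i), |d i|
          = -∑ i ∈ Finset.univ.filter (fun i => ¬ 0 < d i), d i := by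
        rw [← Finset.sum_neg_distrib]
        exact Finset.sum_congr rfl
          (fun i hi => abs_of_nonpos (not_lt.mp (Finset.mem_filter.mp hi).2))
      rw [e1, e2]
      linarith
    have hhalf : ε / 2 ≤ ∑ i ∈ A, d i := by
      have : ε ≤ 2 * ∑ i ∈ A, d i := by rw [← habs]; exact hω
      linarith
    have hApos : 0 < ∑ i ∈ A, d i := lt_of_lt_of_le (by linarith) hhalf
    have hAne : A ≠ ∅ := by
      intro h
      rw [h, Finset.sum_empty] at hApos
      exact lt_irrefl 0 hApos
    have hAnuniv : A ≠ Finset.univ := by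
      intro h
      rw [h, hsumd] at hApos
      exact lt_irrefl 0 hApos
    have hAS : A ∈ S := by
      rw [hS]
      exact Finset.mem_erase.mpr ⟨hAnuniv, Finset.mem_erase.mpr
        ⟨hAne, Finset.mem_powerset.mpr (Finset.subset_univ A)⟩⟩
    refine Set.mem_biUnion hAS ?_
    rw [hE]
    simp only [Set.mem_setOf_eq]
    -- count of samples landing in A
    have hcA : ∑ j, (if X j ω ∈ A then (1:ℝ) else 0)
        = ∑ i ∈ A, c i := by
      rw [Finset.sum_boole, hc, ← Nat.cast_sum]
      congr 1
      refine (Finset.card_eq_sum_card_fiberwise (t := A) (f := fun j => X j ω) ?_).trans ?_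
      · intro j hj
        exact (Finset.mem_filter.mp hj).2
      · refine Finset.sum_congr rfl (fun i hi => ?_)
        congr 1
        ext j
        simp only [Finset.mem_filter, Finset.mem_univ, true_and]
        exact ⟨fun ⟨_, h2⟩ => h2, fun h => ⟨h ▸ hi, h⟩⟩
    have hsub : ∑ j, ((if X j ω ∈ A then (1:ℝ) else 0) - Q A)
        = (∑ i ∈ A, c i) - (n : ℝ) * Q A := by
      rw [Finset.sum_sub_distrib, hcA, Finset.sum_const, Finset.card_univ, Fintype.card_fin,
        nsmul_eq_mul]
    rw [hsub]
    have hdA : ∑ i ∈ A, d i = (∑ i ∈ A, c i) / n - Q A := by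
      rw [hd, Finset.sum_sub_distrib, ← Finset.sum_div, hQ]
    rw [hdA] at hhalf
    have := mul_le_mul_of_nonneg_left hhalf hnpos.le
    calc (n : ℝ) * ε / 2 = (n:ℝ) * (ε / 2) := by ring
      _ ≤ (n:ℝ) * ((∑ i ∈ A, c i) / n - Q A) := this
      _ = (∑ i ∈ A, c i) - (n : ℝ) * Q A := by field_simp
  -- union bound
  have hcard : S.card = 2 ^ k - 2 := by
    rw [hS]
    have h1 : (Finset.univ : Finset (Fin k)).powerset.card = 2 ^ k := by
      rw [Finset.card_powerset, Finset.card_univ, Fintype.card_fin]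
    have hne : (∅ : Finset (Fin k)) ∈ (Finset.univ : Finset (Fin k)).powerset :=
      Finset.mem_powerset.mpr (Finset.empty_subset _)
    have huniv_ne : (Finset.univ : Finset (Fin k)) ≠ ∅ := by
      have : (0:ℕ) < k := by omega
      simp [Finset.univ_eq_empty_iff, Fin.pos_iff_nonempty.mp this]
    have hu : (Finset.univ : Finset (Fin k)) ∈
        (Finset.univ : Finset (Fin k)).powerset.erase ∅ := by
      exact Finset.mem_erase.mpr ⟨huniv_ne, Finset.mem_powerset.mpr (subset_refl _)⟩
    rw [Finset.card_erase_of_mem hu, Finset.card_erase_of_mem hne, h1]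
    omega
  have hSc := hcard
  calc μ {ω | ε ≤ ∑ i, |((Finset.univ.filter (fun j => X j ω = i)).card : ℝ) / n - p i|}
      ≤ μ (⋃ A ∈ S, E A) := measure_mono hincl
    _ ≤ ∑ A ∈ S, μ (E A) := measure_biUnion_finset_le S E
    _ ≤ ∑ A ∈ S, ENNReal.ofReal (Real.exp (-(n : ℝ) * ε ^ 2 / 2)) := by
        refine Finset.sum_le_sum (fun A _ => ?_)
        exact chernoff_subset k n hn Ω μ X hmeas hindep A (Q A) (hQ0 A) (hQ1 A)
          (hA A) ε hε
    _ = (S.card : ENNReal) * ENNReal.ofReal (Real.exp (-(n : ℝ) * ε ^ 2 / 2)) := by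
        rw [Finset.sum_const, nsmul_eq_mul]
    _ = ENNReal.ofReal ((2 ^ k - 2) * Real.exp (-(n : ℝ) * ε ^ 2 / 2)) := by
        rw [hcard]
        have h2kR : (2:ℝ) ≤ 2 ^ k := by
          calc (2:ℝ) = 2 ^ 1 := by norm_num
            _ ≤ 2 ^ k := by
              apply pow_le_pow_right₀ (by norm_num) (by omega)
        rw [ENNReal.ofReal_mul (by linarith)]
        congr 1
        have h2k : 2 ≤ 2 ^ k := by
          calc 2 = 2 ^ 1 := by norm_num
            _ ≤ 2 ^ k := Nat.pow_le_pow_right (by norm_num) (by omega)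
        rw [← ENNReal.ofReal_natCast (2 ^ k - 2)]
        congr 1
        push_cast [Nat.cast_sub h2k]
        ring
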